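/- arXiv:0711.4347 — 3 statements merged into one kernel-verified Lean document; each statement's English description precedes it below -/
import Mathlib

section
/- Let G be a finite group of characteristic p, P a p-subgroup of G, and H a subgroup of G with P·C_G(P) ≤ H ≤ N_G(P). Then H has characteristic p. -/
/-- The largest normal `p`-subgroup `O_p(G)`: the join of all normal `p`-subgroups. -/
def pCore (p : ℕ) (G : Type*) [Group G] : Subgroup G :=
  ⨆ (N : Subgroup G) (_ : N.Normal) (_ : IsPGroup p N), N

/-- A group `G` has characteristic `p` if `C_G(O_p(G)) ≤ O_p(G)`. -/
def HasCharP (p : ℕ) (G : Type*) [Group G] : Prop :=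
  Subgroup.centralizer (pCore p G : Set G) ≤ pCore p G

/-- An element is `p`-central if it has order `p` and lies in the center of some
Sylow `p`-subgroup of `G`. -/
def IsPCentral (p : ℕ) {G : Type*} [Group G] (x : G) : Prop :=
  orderOf x = p ∧ ∃ S : Sylow p G,
    x ∈ (S : Subgroup G) ⊓ Subgroup.centralizer ((S : Subgroup G) : Set G)

/-- A `p`-subgroup `P` is `p`-centric if `Z(P) = P ⊓ C_G(P)` is a Sylow `p`-subgroup of
`C_G(P)`, expressed via maximality among `p`-subgroups of `C_G(P)`. -/
def IsPCentric (p : ℕ) {G : Type*} [Group G] (P : Subgroup G) : Prop :=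
  ∀ Q : Subgroup G, Q ≤ Subgroup.centralizer (P : Set G) → IsPGroup p Q →
    P ⊓ Subgroup.centralizer (P : Set G) ≤ Q →
    Q = P ⊓ Subgroup.centralizer (P : Set G)

/-- The step `P ↦ O_p(N_G(P))`, viewed as a subgroup of `G`. -/
def pRadicalStep (p : ℕ) {G : Type*} [Group G] (P : Subgroup G) : Subgroup G :=
  (pCore p ↥(Subgroup.normalizer (P : Set G))).map (Subgroup.normalizer (P : Set G)).subtype

/-- The chain `P₀ = Q`, `P_{i+1} = O_p(N_G(P_i))`. -/
def radChain (p : ℕ) {G : Type*} [Group G] (Q : Subgroup G) : ℕ → Subgroup G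
  | 0 => Q
  | n + 1 => pRadicalStep p (radChain p Q n)

/-- `G` has local characteristic `p`: every `p`-local subgroup has characteristic `p`. -/
def LocalCharP (p : ℕ) (G : Type*) [Group G] : Prop :=
  ∀ P : Subgroup G, P ≠ ⊥ → IsPGroup p P → HasCharP p ↥(Subgroup.normalizer (P : Set G))

/-- `G` has parabolic characteristic `p`: every `p`-local subgroup containing a Sylow
`p`-subgroup of `G` has characteristic `p`. -/
def ParabolicCharP (p : ℕ) (G : Type*) [Group G] : Prop :=
  ∀ P : Subgroup G, P ≠ ⊥ → IsPGroup p P →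
    (∃ S : Sylow p G, (S : Subgroup G) ≤ Subgroup.normalizer (P : Set G)) → HasCharP p ↥(Subgroup.normalizer (P : Set G))

section AuxSection
open Subgroup Pointwise
open scoped commutatorElement IsMulCommutative

section Aux
variable {p q : ℕ}

/-- The "coboundary" subgroup `[A, f]` generated by `s⁻¹ * f s`. -/
def commD {R : Type*} [Group R] (f : MulAut R) : Subgroup R :=
  Subgroup.closure {y : R | ∃ s, y = s⁻¹ * f s}

theorem mem_commD_gen {R : Type*} [Group R] (f : MulAut R) (s : R) :
    s⁻¹ * f s ∈ commD f :=
  Subgroup.subset_closure ⟨s, rfl⟩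

/-- Coprime action on an abelian group: `A = [A,f] * C_A(f)`. -/
theorem abelian_decomp {A : Type*} [CommGroup A] [Finite A]
    (hcop : (Nat.card A).Coprime q) (f : MulAut A) (hf : f ^ q = 1) (a : A) :
    ∃ d ∈ commD f, ∃ c, f c = c ∧ a = d * c := by
  rcases subsingleton_or_nontrivial A with hs | hns
  · exact ⟨1, one_mem _, a, Subsingleton.elim _ _, (one_mul a).symm⟩
  set m := Nat.card A with hm
  have hm1 : 1 < m := Finite.one_lt_card
  have hq0 : q ≠ 0 := by
    rintro rfl
    simp [Nat.coprime_zero_right] at hcop; omega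
  -- the norm map
  set ν : A → A := fun b => ∏ i ∈ Finset.range q, (f ^ i) b with hν
  have hν_fixed : ∀ b, f (ν b) = ν b := by
    intro b
    have : f (ν b) = ∏ i ∈ Finset.range q, (f ^ (i + 1)) b := by
      rw [hν]
      rw [map_prod]
      refine Finset.prod_congr rfl fun i _ => ?_
      rw [pow_succ', MulAut.mul_apply]
    rw [this]
    have h1 : ∏ i ∈ Finset.range (q + 1), (f ^ i) b
        = (∏ i ∈ Finset.range q, (f ^ (i + 1)) b) * (f ^ 0) b := Finset.prod_range_succ' _ _
    have h2 : ∏ i ∈ Finset.range (q + 1), (f ^ i) b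
        = (∏ i ∈ Finset.range q, (f ^ i) b) * (f ^ q) b := Finset.prod_range_succ _ _
    have h3 : (f ^ q) b = (f ^ 0) b := by rw [hf, pow_zero]
    have := h1.symm.trans h2
    rw [h3] at this
    exact mul_right_cancel this
  have hν_decomp : ∀ b, ∃ d ∈ commD f, ν b = b ^ q * d := by
    intro b
    have hmem : ∀ i : ℕ, b⁻¹ * (f ^ i) b ∈ commD f := by
      intro i
      induction i with
      | zero => simpa using (commD f).one_mem
      | succ i ih =>
        have hstep : (f ^ (i + 1)) b = f ((f ^ i) b) := by
          rw [pow_succ', MulAut.mul_apply]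
        have : b⁻¹ * (f ^ (i + 1)) b
            = (b⁻¹ * (f ^ i) b) * (((f ^ i) b)⁻¹ * f ((f ^ i) b)) := by
          rw [hstep]; group
        rw [this]
        exact mul_mem ih (mem_commD_gen f _)
    refine ⟨∏ i ∈ Finset.range q, (b⁻¹ * (f ^ i) b), prod_mem fun i _ => hmem i, ?_⟩
    show ∏ i ∈ Finset.range q, (f ^ i) b = _
    calc ∏ i ∈ Finset.range q, (f ^ i) b
        = ∏ i ∈ Finset.range q, (b * (b⁻¹ * (f ^ i) b)) := by
          refine Finset.prod_congr rfl fun i _ => ?_; group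
      _ = (∏ _i ∈ Finset.range q, b) * ∏ i ∈ Finset.range q, (b⁻¹ * (f ^ i) b) :=
          Finset.prod_mul_distrib
      _ = b ^ q * ∏ i ∈ Finset.range q, (b⁻¹ * (f ^ i) b) := by
          rw [Finset.prod_const, Finset.card_range]
  -- coprime exponentiation
  obtain ⟨u, -, hu⟩ := Nat.exists_mul_mod_eq_one_of_coprime (hcop.symm) hm1
  have hqu : q * u ≡ 1 [MOD m] := by
    have : q * u % m = 1 % m := by rw [hu, Nat.one_mod_eq_one.mpr (by omega)]
    exact this
  have hpow : ∀ b : A, b ^ (q * u) = b := by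
    intro b
    have h1 : orderOf b ∣ m := orderOf_dvd_natCard b
    have := (hqu.of_dvd h1)
    calc b ^ (q * u) = b ^ 1 := pow_eq_pow_iff_modEq.mpr this
    _ = b := pow_one b
  obtain ⟨d, hd, hdq⟩ := hν_decomp (a ^ u)
  refine ⟨d⁻¹, inv_mem hd, ν (a ^ u), hν_fixed _, ?_⟩
  have : (a ^ u) ^ q = a := by rw [← pow_mul, mul_comm u q, hpow]
  rw [hdq, this, mul_comm a d, inv_mul_cancel_left]
end Aux


/-- Coprime fixed-point lifting: if `f` has order dividing a prime `q ≠ p`, `N` is an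
`f`-invariant `p`-subgroup and `f` fixes the coset `rN`, then `f` fixes a point of `rN`. -/
theorem coset_fixed {R : Type*} [Group R] [Finite R] {p q : ℕ} (hp : p.Prime) (hq : q.Prime)
    (hne : q ≠ p) (N : Subgroup R) (hN : IsPGroup p N) (f : MulAut R) (hf : f ^ q = 1)
    (hNf : ∀ n ∈ N, f n ∈ N) (hNf' : ∀ n ∈ N, f.symm n ∈ N) (r : R)
    (hr : r⁻¹ * f r ∈ N) : ∃ n ∈ N, f (r * n) = r * n := by
  classical
  set S : Set R := {s | r⁻¹ * s ∈ N} with hS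
  -- forward invariance
  have hfS : ∀ s ∈ S, f s ∈ S := by
    intro s hs
    have : r⁻¹ * f s = (r⁻¹ * f r) * (f (r⁻¹ * s)) := by
      rw [map_mul, map_inv]; group
    show r⁻¹ * f s ∈ N
    rw [this]
    exact mul_mem hr (hNf _ hs)
  have hr' : r⁻¹ * f.symm r ∈ N := by
    have h1 : f.symm (r⁻¹ * f r) ∈ N := hNf' _ hr
    have : f.symm (r⁻¹ * f r) = f.symm r⁻¹ * r := by
      rw [map_mul, MulEquiv.symm_apply_apply]
    rw [this] at h1
    have := N.inv_mem h1
    simpa [mul_inv_rev] using this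
  have hfS' : ∀ s ∈ S, f.symm s ∈ S := by
    intro s hs
    have : r⁻¹ * f.symm s = (r⁻¹ * f.symm r) * (f.symm (r⁻¹ * s)) := by
      rw [map_mul, map_inv]; group
    show r⁻¹ * f.symm s ∈ N
    rw [this]
    exact mul_mem hr' (hNf' _ hs)
  -- the acting q-group
  set X : Subgroup (MulAut R) := Subgroup.zpowers f with hX
  have hXq : IsPGroup q X := by
    have h1 : Nat.card X = orderOf f := Nat.card_zpowers f
    have h2 : orderOf f ∣ q := orderOf_dvd_of_pow_eq_one hf
    rcases (Nat.Prime.eq_one_or_self_of_dvd hq _ h2) with h | h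
    · exact IsPGroup.of_card (n := 0) (by rw [h1, h, pow_zero])
    · exact IsPGroup.of_card (n := 1) (by rw [h1, h, pow_one])
  -- S as a SubMulAction of X
  have hsmul : ∀ (g : X) (s : R), s ∈ S → g • s ∈ S := by
    rintro ⟨g, hg⟩ s hs
    obtain ⟨k, hk⟩ := hg
    have key : ∀ (j : ℕ) (t : R), t ∈ S → (f ^ j) t ∈ S ∧ (f ^ j).symm t ∈ S := by
      intro j
      induction j with
      | zero => intro t ht; simpa using ⟨ht, ht⟩
      | succ j ih =>
        intro t ht
        constructor
        · rw [pow_succ, MulAut.mul_apply]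
          exact (ih _ (hfS _ ht)).1
        · have : (f ^ (j + 1)).symm t = (f ^ j).symm (f.symm t) := by
            rw [pow_succ']
            rfl
          rw [this]
          exact (ih _ (hfS' _ ht)).2
    show g • s ∈ S
    have : (g • s : R) = g s := rfl
    rw [this, ← hk]
    rcases k with k | k
    · simpa using (key k s hs).1
    · have : (f ^ Int.negSucc k) s = (f ^ (k + 1)).symm s := by
        rw [zpow_negSucc]
        rfl
      rw [this]
      exact (key (k + 1) s hs).2
  set S' : SubMulAction X R := ⟨S, fun {g s} hs => hsmul g s hs⟩ with hS'
  haveI : Finite S' := inferInstanceAs (Finite ↥S)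
  haveI := Fact.mk hp
  haveI := Fact.mk hq
  -- count fixed points
  have hcard : Nat.card S' = Nat.card N := by
    refine Nat.card_congr ?_
    refine
      { toFun := fun s => ⟨r⁻¹ * s.1, s.2⟩
        invFun := fun n => ⟨r * n.1, show r⁻¹ * (r * n.1) ∈ N by
          rw [inv_mul_cancel_left]; exact n.2⟩
        left_inv := ?_
        right_inv := ?_ }
    · rintro ⟨s, hs⟩
      apply Subtype.ext
      show r * (r⁻¹ * s) = s
      rw [mul_inv_cancel_left]
    · rintro ⟨n, hn⟩
      apply Subtype.ext
      show r⁻¹ * (r * n) = n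
      rw [inv_mul_cancel_left]
  have hmod := hXq.card_modEq_card_fixedPoints S'
  have hndvd : ¬ q ∣ Nat.card S' := by
    rw [hcard]
    obtain ⟨k, hk⟩ := (IsPGroup.iff_card (p := p) (G := ↥N)).mp hN
    rw [hk]
    intro hdvd
    exact hne ((Nat.prime_dvd_prime_iff_eq hq hp).mp (hq.dvd_of_dvd_pow hdvd))
  have hfix : Nat.card (MulAction.fixedPoints X S') ≠ 0 := by
    intro h0
    rw [h0] at hmod
    exact hndvd (Nat.modEq_zero_iff_dvd.mp hmod)
  have hne' : Nonempty (MulAction.fixedPoints X S') :=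
    (Nat.card_pos_iff.mp (Nat.pos_of_ne_zero hfix)).1
  obtain ⟨⟨s, hsS⟩, hsfix⟩ := hne'
  have hfs := hsfix ⟨f, Subgroup.mem_zpowers f⟩
  have hfs' : f s = s := by
    have := congrArg (fun z : S' => (z : R)) hfs
    exact this
  refine ⟨r⁻¹ * s, hsS, ?_⟩
  rw [mul_inv_cancel_left]
  exact hfs'



section Helpers
variable {R : Type*} [Group R]

/-- Restrict an automorphism to an invariant subgroup. -/
def restrictAut (N : Subgroup R) (f : MulAut R) (hf : ∀ n ∈ N, f n ∈ N)
    (hf' : ∀ n ∈ N, f.symm n ∈ N) : MulAut ↥N where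
  toFun n := ⟨f n, hf n n.2⟩
  invFun n := ⟨f.symm n, hf' n n.2⟩
  left_inv n := by apply Subtype.ext; simp
  right_inv n := by apply Subtype.ext; simp
  map_mul' a b := by apply Subtype.ext; simp

@[simp] theorem restrictAut_apply (N : Subgroup R) (f : MulAut R) (hf) (hf') (n : ↥N) :
    ((restrictAut N f hf hf' n : ↥N) : R) = f n := rfl

theorem restrictAut_pow_apply (N : Subgroup R) (f : MulAut R) (hf) (hf') (k : ℕ) (n : ↥N) :
    (((restrictAut N f hf hf') ^ k) n : R) = (f ^ k) n := by
  induction k generalizing n with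
  | zero => simp
  | succ k ih =>
    rw [pow_succ, pow_succ, MulAut.mul_apply, MulAut.mul_apply, ih]
    rw [restrictAut_apply]

/-- The automorphism induced on a quotient. -/
def quotAut (N : Subgroup R) [N.Normal] (f : MulAut R) (hm : N.map f.toMonoidHom = N) :
    MulAut (R ⧸ N) :=
  QuotientGroup.congr N N f hm

theorem quotAut_apply (N : Subgroup R) [N.Normal] (f : MulAut R) (hm) (r : R) :
    quotAut N f hm (QuotientGroup.mk r) = QuotientGroup.mk (f r) := rfl

theorem quotAut_pow_apply (N : Subgroup R) [N.Normal] (f : MulAut R) (hm) (k : ℕ) (r : R) :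
    ((quotAut N f hm) ^ k) (QuotientGroup.mk r) = QuotientGroup.mk ((f ^ k) r) := by
  induction k generalizing r with
  | zero => rw [pow_zero, pow_zero]; rfl
  | succ k ih =>
    rw [pow_succ, pow_succ, MulAut.mul_apply, MulAut.mul_apply, quotAut_apply, ih]

end Helpers


universe u

theorem coprime_decomp {p q : ℕ} (hp : p.Prime) (hq : q.Prime) (hne : q ≠ p) :
    ∀ (n : ℕ) (R : Type u) [Group R] [Finite R], Nat.card R ≤ n → IsPGroup p R →
    ∀ (f : MulAut R), f ^ q = 1 → ∀ r : R, ∃ d ∈ commD f, ∃ c, f c = c ∧ r = d * c := by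
  intro n
  induction n with
  | zero =>
    intro R _ _ hcard _ _ _ _
    exact absurd hcard (by have := Nat.card_pos (α := R); omega)
  | succ n ih =>
    intro R _ _ hcard hpR f hf r
    haveI := Fact.mk hp
    haveI := Fact.mk hq
    rcases subsingleton_or_nontrivial R with hs | hns
    · exact ⟨1, one_mem _, r, Subsingleton.elim _ _, (one_mul r).symm⟩
    set Z := Subgroup.center R with hZdef
    haveI : Nontrivial ↥Z := hpR.center_nontrivial
    have hfZ : ∀ z ∈ Z, f z ∈ Z := by
      intro z hz
      rw [Subgroup.mem_center_iff] at hz ⊢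
      intro g
      calc g * f z = f (f.symm g * z) := by rw [map_mul, MulEquiv.apply_symm_apply]
        _ = f (z * f.symm g) := by rw [hz]
        _ = f z * g := by rw [map_mul, MulEquiv.apply_symm_apply]
    have hfZ' : ∀ z ∈ Z, f.symm z ∈ Z := by
      intro z hz
      rw [Subgroup.mem_center_iff] at hz ⊢
      intro g
      calc g * f.symm z = f.symm (f g * z) := by rw [map_mul, MulEquiv.symm_apply_apply]
        _ = f.symm (z * f g) := by rw [hz]
        _ = f.symm z * g := by rw [map_mul, MulEquiv.symm_apply_apply]
    have hmapZ : Z.map f.toMonoidHom = Z := by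
      apply le_antisymm
      · rintro _ ⟨z, hz, rfl⟩
        exact hfZ z hz
      · intro z hz
        exact ⟨f.symm z, hfZ' z hz, f.apply_symm_apply z⟩
    set fQ := quotAut Z f hmapZ with hfQdef
    have hfQq : fQ ^ q = 1 := by
      apply MulEquiv.ext
      intro y
      induction y using QuotientGroup.induction_on with
      | H r' =>
        rw [quotAut_pow_apply, hf]
        rfl
    have hZ1 : 1 < Nat.card ↥Z := Finite.one_lt_card
    have hcardQ : Nat.card (R ⧸ Z) ≤ n := by
      have h1 := Subgroup.card_eq_card_quotient_mul_card_subgroup Z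
      have h2 : 0 < Nat.card (R ⧸ Z) := Nat.card_pos
      nlinarith [hcard]
    obtain ⟨dQ, hdQ, cQ, hcQ, hrQ⟩ := ih (R ⧸ Z) hcardQ (hpR.to_quotient Z) fQ hfQq
      (QuotientGroup.mk r)
    -- identify commD fQ
    have hDQ : commD fQ = (commD f).map (QuotientGroup.mk' Z) := by
      have hset : {y : R ⧸ Z | ∃ s, y = s⁻¹ * fQ s}
          = (QuotientGroup.mk' Z) '' {y : R | ∃ s, y = s⁻¹ * f s} := by
        ext y
        constructor
        · rintro ⟨s, rfl⟩
          induction s using QuotientGroup.induction_on with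
          | H s' =>
            exact ⟨s'⁻¹ * f s', ⟨s', rfl⟩, by
              rw [map_mul, map_inv]; rfl⟩
        · rintro ⟨w, ⟨s, rfl⟩, rfl⟩
          exact ⟨QuotientGroup.mk s, by rw [map_mul, map_inv]; rfl⟩
      rw [commD, hset, ← MonoidHom.map_closure]
      rfl
    rw [hDQ] at hdQ
    obtain ⟨d, hd, hdq⟩ := hdQ
    have hc : QuotientGroup.mk (d⁻¹ * r) = cQ := by
      have : dQ⁻¹ * QuotientGroup.mk r = cQ := by rw [hrQ]; group
      rw [← this, ← hdq]
      rfl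
    have hcfix : (d⁻¹ * r)⁻¹ * f (d⁻¹ * r) ∈ Z := by
      have h1 : fQ (QuotientGroup.mk (d⁻¹ * r)) = QuotientGroup.mk (d⁻¹ * r) := by
        rw [hc, hcQ]
      rw [quotAut_apply] at h1
      exact (QuotientGroup.eq).mp h1.symm
    obtain ⟨z, hzZ, hfix⟩ := coset_fixed hp hq hne Z (hpR.to_subgroup Z) f hf hfZ hfZ'
      (d⁻¹ * r) hcfix
    set c₁ := d⁻¹ * r * z with hc₁
    -- decompose z⁻¹ in the center
    set fZ := restrictAut Z f hfZ hfZ' with hfZdef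
    have hfZq : fZ ^ q = 1 := by
      apply MulEquiv.ext
      intro w
      apply Subtype.ext
      have := restrictAut_pow_apply Z f hfZ hfZ' q w
      rw [hfZdef]
      rw [this, hf]
      rfl
    have hcop : (Nat.card ↥Z).Coprime q := by
      obtain ⟨k, hk⟩ := (hpR.to_subgroup Z).exists_card_eq
      rw [hk]
      exact (Nat.Coprime.pow_left k ((Nat.coprime_primes hp hq).mpr hne.symm))
    obtain ⟨dz, hdz, cz, hcz, hzeq⟩ := abelian_decomp hcop fZ hfZq (⟨z, hzZ⟩ : ↥Z)⁻¹
    have hdzR : (dz : R) ∈ commD f := by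
      have hle : (commD fZ).map Z.subtype ≤ commD f := by
        rw [commD, MonoidHom.map_closure]
        apply Subgroup.closure_mono
        rintro _ ⟨w, ⟨σ, rfl⟩, rfl⟩
        exact ⟨(σ : R), by push_cast [restrictAut_apply]; rfl⟩
      exact hle ⟨dz, hdz, rfl⟩
    have hczR : f (cz : R) = (cz : R) := by
      have h1 := congrArg (fun w : ↥Z => (w : R)) hcz
      have h2 : ((fZ cz : ↥Z) : R) = f (cz : R) := restrictAut_apply Z f hfZ hfZ' cz
      rw [← h2]
      exact h1
    refine ⟨d * (dz : R), mul_mem hd hdzR, c₁ * (cz : R), ?_, ?_⟩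
    · rw [map_mul, hfix, hczR]
    · have hzinv : (dz : R) * (cz : R) = z⁻¹ := by
        have := congrArg (fun w : ↥Z => (w : R)) hzeq
        simpa using this.symm
      have hcomm : c₁ * (dz : R) = (dz : R) * c₁ := Subgroup.mem_center_iff.mp dz.2 c₁
      calc r = d * c₁ * z⁻¹ := by rw [hc₁]; group
        _ = d * c₁ * ((dz : R) * (cz : R)) := by rw [hzinv]
        _ = d * (c₁ * (dz : R)) * (cz : R) := by group
        _ = d * ((dz : R) * c₁) * (cz : R) := by rw [hcomm]
        _ = d * (dz : R) * (c₁ * (cz : R)) := by group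

section Ambient
variable {G : Type*} [Group G]

theorem map_conj_eq_of_mem_normalizer {H : Subgroup G} {x : G} (hx : x ∈ Subgroup.normalizer (H : Set G)) :
    H.map (MulAut.conj x).toMonoidHom = H := by
  ext g
  constructor
  · rintro ⟨h, hh, rfl⟩
    exact (Subgroup.mem_normalizer_iff.mp hx h).mp hh
  · intro hg
    refine ⟨x⁻¹ * g * x, ?_, by simp [MulAut.conj_apply]; group⟩
    have := (Subgroup.mem_normalizer_iff.mp ((Subgroup.normalizer (H : Set G)).inv_mem hx) g).mp hg
    simpa [mul_assoc] using this

theorem mem_normalizer_of_map_conj_eq {H : Subgroup G} {x : G}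
    (h : H.map (MulAut.conj x).toMonoidHom = H) : x ∈ Subgroup.normalizer (H : Set G) := by
  rw [Subgroup.mem_normalizer_iff]
  intro g
  constructor
  · intro hg
    rw [← h]
    exact ⟨g, hg, rfl⟩
  · intro hg
    rw [← h] at hg
    obtain ⟨g', hg', hgg⟩ := hg
    have : g' = g := by
      have : x * g' * x⁻¹ = x * g * x⁻¹ := hgg
      group at this
      exact mul_left_cancel (mul_right_cancel this)
    rwa [← this]

/-- If `⁅R,P⁆ = R` for `p`-subgroups with `P` normalizing `R`, then `R` is trivial. -/
theorem eq_bot_of_commutator_eq {p : ℕ} [Fact p.Prime] [Finite G] {R P : Subgroup G}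
    (hR : IsPGroup p R) (hP : IsPGroup p P) (hPn : P ≤ Subgroup.normalizer (R : Set G))
    (h : ⁅R, P⁆ = R) : R = ⊥ := by
  set T := P ⊔ R with hT
  have hTp : IsPGroup p T := IsPGroup.to_sup_of_normal_right' hP hR hPn
  have hnil : Group.IsNilpotent ↥T := hTp.isNilpotent
  obtain ⟨k, hk⟩ := _root_.nilpotent_iff_lowerCentralSeries.mp hnil
  have key : ∀ n, R ≤ ((⊤ : Subgroup ↥T).lowerCentralSeries n).map T.subtype := by
    intro n
    induction n with
    | zero =>
      have h2 : (⊤ : Subgroup ↥T).map T.subtype = T := by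
        rw [← MonoidHom.range_eq_map, Subgroup.range_subtype]
      rw [_root_.lowerCentralSeries_zero, h2]
      exact le_sup_right
    | succ n ih =>
      have hsucc : (⊤ : Subgroup ↥T).lowerCentralSeries (n + 1) = ⁅(⊤ : Subgroup ↥T).lowerCentralSeries n, (⊤ : Subgroup ↥T)⁆ :=
        rfl
      rw [hsucc, Subgroup.map_commutator]
      have h2 : (⊤ : Subgroup ↥T).map T.subtype = T := by
        rw [← MonoidHom.range_eq_map, Subgroup.range_subtype]
      rw [h2]
      calc R = ⁅R, P⁆ := h.symm
        _ ≤ ⁅((⊤ : Subgroup ↥T).lowerCentralSeries n).map T.subtype, T⁆ :=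
            Subgroup.commutator_mono ih le_sup_left
  have := key k
  rw [hk] at this
  simpa using this

end Ambient

theorem hallWitt {G : Type*} [Group G] (a b c : G) :
    (a⁻¹ * ⁅⁅a, c⁻¹⁆, b⁻¹⁆ * a) * (b⁻¹ * ⁅⁅b, a⁻¹⁆, c⁻¹⁆ * b) * (c⁻¹ * ⁅⁅c, b⁻¹⁆, a⁻¹⁆ * c) = 1 := by
  group

section PxQ
variable {G : Type u} [Group G] [Finite G]

theorem pxq {p q : ℕ} [Fact p.Prime] (hq : q.Prime) (hne : q ≠ p)
    (P : Subgroup G) (hP : IsPGroup p P) (x : G) (hxq : x ^ q = 1)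
    (hxP : ∀ u ∈ P, Commute x u) :
    ∀ (n : ℕ) (R : Subgroup G), Nat.card R ≤ n → IsPGroup p R → P ≤ Subgroup.normalizer (R : Set G) →
      x ∈ Subgroup.normalizer (R : Set G) → (∀ w ∈ R, (∀ u ∈ P, Commute u w) → Commute x w) →
      ∀ r ∈ R, Commute x r := by
  have hp : p.Prime := Fact.out
  intro n
  induction n with
  | zero =>
    intro R hcard
    exact absurd hcard (by have := Nat.card_pos (α := ↥R); omega)
  | succ n ih =>
    intro R hcard hpR hPN hxN hcent r hr
    -- the conjugation-fixed subgroup of P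
    have hxPconj : ∀ u ∈ P, x * u * x⁻¹ = u := by
      intro u hu
      have := hxP u hu
      rw [Commute, SemiconjBy] at this
      rw [this]
      group
    have hmapP : P.map (MulAut.conj x).toMonoidHom = P := by
      ext g
      constructor
      · rintro ⟨u, hu, rfl⟩
        show x * u * x⁻¹ ∈ P
        rw [hxPconj u hu]
        exact hu
      · intro hg
        exact ⟨g, hg, hxPconj g hg⟩
    set R₀ : Subgroup G := ⁅R, P⁆ with hR₀def
    have hR₀le : R₀ ≤ R := by
      rw [hR₀def]
      rw [Subgroup.commutator_le]
      intro g₁ h₁ g₂ h₂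
      have h3 : g₂ * g₁⁻¹ * g₂⁻¹ ∈ R :=
        (Subgroup.mem_normalizer_iff.mp (hPN h₂) g₁⁻¹).mp (R.inv_mem h₁)
      have : ⁅g₁, g₂⁆ = g₁ * (g₂ * g₁⁻¹ * g₂⁻¹) := by
        rw [commutatorElement_def]; group
      rw [this]
      exact R.mul_mem h₁ h3
    by_cases hR₀ : R₀ = R
    · have hbot := eq_bot_of_commutator_eq hpR hP hPN hR₀
      rw [hbot] at hr
      rw [Subgroup.mem_bot] at hr
      rw [hr]
      exact Commute.one_right x
    · have hlt : Nat.card ↥R₀ < Nat.card ↥R := by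
        rw [show Nat.card ↥R₀ = Nat.card (R₀ : Set G) from rfl,
          show Nat.card ↥R = Nat.card (R : Set G) from rfl,
          Nat.card_coe_set_eq, Nat.card_coe_set_eq]
        refine Set.ncard_lt_ncard ?_ (Set.toFinite _)
        exact HasSubset.Subset.ssubset_of_ne (by exact_mod_cast hR₀le)
          (by simpa using fun h => hR₀ (SetLike.coe_injective h))
      have hxR₀ : ∀ w ∈ R₀, Commute x w := by
        refine ih R₀ (by omega) (hpR.to_le hR₀le) ?_ ?_ ?_
        · intro u hu
          apply mem_normalizer_of_map_conj_eq
          rw [hR₀def, Subgroup.map_commutator,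
            map_conj_eq_of_mem_normalizer (hPN hu),
            map_conj_eq_of_mem_normalizer (Subgroup.le_normalizer hu)]
        · apply mem_normalizer_of_map_conj_eq
          rw [hR₀def, Subgroup.map_commutator,
            map_conj_eq_of_mem_normalizer hxN, hmapP]
        · intro w hw hwP
          exact hcent w (hR₀le hw) hwP
      -- Hall–Witt: ⁅x, r'⁆ commutes with P
      have hcomm3 : ∀ r' ∈ R, ∀ u ∈ P, Commute ⁅x, r'⁆ u := by
        have main : ∀ r'' ∈ R, ∀ u ∈ P, ⁅⁅x, r''⁻¹⁆, u⁆ = 1 := by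
          intro r'' hr'' u hu
          have hid := hallWitt x u⁻¹ r''
          have h2 : ⁅u⁻¹, x⁻¹⁆ = 1 := by
            rw [commutatorElement_eq_one_iff_commute]
            exact ((hxP u hu).symm.inv_left).inv_right
          have h3 : ⁅⁅r'', u⁆, x⁻¹⁆ = 1 := by
            rw [commutatorElement_eq_one_iff_commute]
            have hmem : ⁅r'', u⁆ ∈ R₀ := Subgroup.commutator_mem_commutator hr'' hu
            exact ((hxR₀ _ hmem).symm).inv_right
          rw [inv_inv] at hid
          rw [h2, h3] at hid
          simp only [commutatorElement_one_left, mul_one, one_mul] at hid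
          have hid2 : x⁻¹ * ⁅⁅x, r''⁻¹⁆, u⁆ * x = 1 := by simpa using hid
          calc ⁅⁅x, r''⁻¹⁆, u⁆ = x * (x⁻¹ * ⁅⁅x, r''⁻¹⁆, u⁆ * x) * x⁻¹ := by group
            _ = 1 := by rw [hid2]; group
        intro r' hr' u hu
        rw [← commutatorElement_eq_one_iff_commute]
        have := main r'⁻¹ (R.inv_mem hr') u hu
        rwa [inv_inv] at this
      -- hence x commutes with each ⁅x, r'⁆
      have hRcent : ∀ r' ∈ R, Commute x ⁅x, r'⁆ := by
        intro r' hr'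
        refine hcent ⁅x, r'⁆ ?_ ?_
        · have h1 : x * r' * x⁻¹ ∈ R := (Subgroup.mem_normalizer_iff.mp hxN r').mp hr'
          have : ⁅x, r'⁆ = (x * r' * x⁻¹) * r'⁻¹ := by exact commutatorElement_def x r'
          rw [this]
          exact R.mul_mem h1 (R.inv_mem hr')
        · intro u hu
          exact (hcomm3 r' hr' u hu).symm
      -- coprime decomposition of R under conjugation by x
      have hconj : ∀ g ∈ R, (MulAut.conj x) g ∈ R := by
        intro g hg
        rw [MulAut.conj_apply]
        exact (Subgroup.mem_normalizer_iff.mp hxN g).mp hg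
      have hconj' : ∀ g ∈ R, (MulAut.conj x).symm g ∈ R := by
        intro g hg
        rw [MulAut.conj_symm_apply]
        have := (Subgroup.mem_normalizer_iff.mp ((Subgroup.normalizer (R : Set G)).inv_mem hxN) g).mp hg
        simpa [mul_assoc] using this
      set f : MulAut ↥R := restrictAut R (MulAut.conj x) hconj hconj' with hfdef
      have hfq : f ^ q = 1 := by
        apply MulEquiv.ext
        intro w
        apply Subtype.ext
        rw [hfdef]
        rw [restrictAut_pow_apply, ← map_pow, hxq, map_one]
        rfl
      obtain ⟨d, hd, c, hc, heq⟩ := coprime_decomp hp hq hne (Nat.card ↥R) ↥R le_rfl hpR f hfq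
        ⟨r, hr⟩
      have hxc : Commute x (c : G) := by
        have h1 : ((f c : ↥R) : G) = ((c : ↥R) : G) := congrArg Subtype.val hc
        have h2 : ((f c : ↥R) : G) = x * (c : G) * x⁻¹ := by
          rw [hfdef, restrictAut_apply, MulAut.conj_apply]
        rw [h2] at h1
        rw [Commute, SemiconjBy]
        calc x * (c : G) = (x * c * x⁻¹) * x := by group
          _ = (c : G) * x := by rw [h1]
      have hxd : Commute x (d : G) := by
        have hgen : ∀ w ∈ commD f, Commute x (w : G) := by
          intro w hw
          refine Subgroup.closure_induction ?_ (by simpa using Commute.one_right x)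
            (fun y z _ _ hy hz => by
              push_cast
              exact hy.mul_right hz) (fun y _ hy => by
              push_cast
              exact hy.inv_right) hw
          rintro y ⟨σ, rfl⟩
          have hcoe : ((σ⁻¹ * f σ : ↥R) : G) = ⁅x, (σ : G)⁻¹⁆⁻¹ := by
            push_cast
            rw [hfdef, restrictAut_apply, MulAut.conj_apply, commutatorElement_def]
            group
          rw [hcoe]
          exact (hRcent (σ : G)⁻¹ (R.inv_mem σ.2)).inv_right
        exact hgen d hd
      have : r = (d : G) * (c : G) := by
        have := congrArg (fun w : ↥R => (w : G)) heq
        simpa using this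
      rw [this]
      exact hxd.mul_right hxc

end PxQ


section PCore
variable {p : ℕ} {G : Type*} [Group G]

theorem le_pCore {N : Subgroup G} (hN : N.Normal) (hp : IsPGroup p N) : N ≤ pCore p G := by
  refine le_iSup_of_le N ?_
  rw [iSup_pos hN, iSup_pos hp]

theorem normal_le_sylow [Finite G] [Fact p.Prime] {N : Subgroup G} (hN : N.Normal)
    (hp : IsPGroup p N) (S : Sylow p G) : N ≤ S := by
  haveI : Finite (Sylow p G) := inferInstance
  obtain ⟨T, hT⟩ := hp.exists_le_sylow
  obtain ⟨g, rfl⟩ := MulAction.exists_smul_eq G T S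
  intro n hn
  have h1 : g⁻¹ * n * g ∈ N := by
    have := hN.conj_mem n hn g⁻¹
    simpa using this
  show n ∈ ((g • T : Sylow p G) : Subgroup G)
  rw [Sylow.coe_subgroup_smul]
  rw [Subgroup.mem_smul_pointwise_iff_exists]
  exact ⟨g⁻¹ * n * g, hT h1, by simp [MulAut.smul_def, MulAut.conj_apply]; group⟩

theorem pCore_le_sylow [Finite G] [Fact p.Prime] (S : Sylow p G) : pCore p G ≤ S := by
  refine iSup_le fun N => iSup_le fun hN => iSup_le fun hp => normal_le_sylow hN hp S

theorem pCore_isPGroup [Finite G] [Fact p.Prime] : IsPGroup p (pCore p G) := by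
  obtain ⟨S, -⟩ := IsPGroup.of_bot.exists_le_sylow (p := p) (G := G)
  exact S.isPGroup'.to_le (pCore_le_sylow S)

theorem pCore_normal : (pCore p G).Normal := by
  constructor
  intro n hn g
  have : ∀ N : Subgroup G, ∀ x ∈ (⨆ (_ : N.Normal) (_ : IsPGroup p N), N : Subgroup G),
      g * x * g⁻¹ ∈ pCore p G := by
    intro N x hx
    by_cases h1 : N.Normal
    · by_cases h2 : IsPGroup p N
      · rw [iSup_pos h1, iSup_pos h2] at hx
        exact le_pCore h1 h2 (h1.conj_mem x hx g)
      · rw [iSup_pos h1, iSup_neg h2] at hx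
        rw [Subgroup.mem_bot] at hx
        simp [hx, one_mem]
    · rw [iSup_neg h1] at hx
      rw [Subgroup.mem_bot] at hx
      simp [hx, one_mem]
  refine Subgroup.iSup_induction _ (C := fun x => g * x * g⁻¹ ∈ pCore p G) hn this
    (by simp [one_mem]) ?_
  intro x y hx hy
  have : g * (x * y) * g⁻¹ = (g * x * g⁻¹) * (g * y * g⁻¹) := by group
  rw [this]
  exact mul_mem hx hy

theorem centralizer_normal {K : Subgroup G} (hK : K.Normal) :
    (Subgroup.centralizer (K : Set G)).Normal := by
  constructor
  intro c hc g
  rw [Subgroup.mem_centralizer_iff] at hc ⊢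
  intro h hh
  have h1 : g⁻¹ * h * g ∈ K := by simpa using hK.conj_mem h hh g⁻¹
  have h2 := hc _ h1
  calc h * (g * c * g⁻¹) = g * ((g⁻¹ * h * g) * c) * g⁻¹ := by group
    _ = g * (c * (g⁻¹ * h * g)) * g⁻¹ := by rw [h2]
    _ = g * c * g⁻¹ * h := by group

end PCore


end AuxSection

/-- If `G` has characteristic `p`, `P` is a `p`-subgroup, and
`P·C_G(P) ≤ H ≤ N_G(P)`, then `H` has characteristic `p`. -/
theorem stmt3 (p : ℕ) [Fact p.Prime] (G : Type*) [Group G] [Finite G]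
    (hG : HasCharP p G) (P : Subgroup G) (hP : IsPGroup p P)
    (H : Subgroup G) (h1 : P ⊔ Subgroup.centralizer (P : Set G) ≤ H)
    (h2 : H ≤ Subgroup.normalizer (P : Set G)) :
    HasCharP p ↥H := by
  have hp : p.Prime := Fact.out
  set QH := pCore p ↥H with hQH
  have hQHnormal : QH.Normal := pCore_normal
  have hCnormal := centralizer_normal hQHnormal
  suffices hCp : IsPGroup p (Subgroup.centralizer (QH : Set ↥H)) from le_pCore hCnormal hCp
  -- preliminary containments
  have hPH : P ≤ H := le_trans le_sup_left h1
  have hCentH : Subgroup.centralizer (P : Set G) ≤ H := le_trans le_sup_right h1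
  have hPsubNormal : (P.subgroupOf H).Normal := by
    constructor
    rintro ⟨a, haH⟩ ha ⟨g, hgH⟩
    rw [Subgroup.mem_subgroupOf] at ha ⊢
    exact (Subgroup.mem_normalizer_iff.mp (h2 hgH) a).mp ha
  have hPQH : P.subgroupOf H ≤ QH := le_pCore hPsubNormal hP.comap_subtype
  set R := pCore p G with hR
  have hRnormal : R.Normal := pCore_normal
  have hRp : IsPGroup p R := pCore_isPGroup
  have hRsubNormal : (R.subgroupOf H).Normal := by
    constructor
    rintro ⟨a, haH⟩ ha ⟨g, hgH⟩
    rw [Subgroup.mem_subgroupOf] at ha ⊢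
    exact hRnormal.conj_mem a ha g
  have hRQH : R.subgroupOf H ≤ QH := le_pCore hRsubNormal hRp.comap_subtype
  -- elementwise p-group proof
  intro y
  have hordy : orderOf y ≠ 0 := by
    have : Finite ↥(Subgroup.centralizer (QH : Set ↥H)) := inferInstance
    exact (orderOf_pos y).ne'
  have key : ∀ q : ℕ, q.Prime → q ∣ orderOf y → q = p := by
    intro q hq hdvd
    by_contra hne
    set z := y ^ (orderOf y / q) with hz
    have hordz : orderOf z = q := orderOf_pow_orderOf_div hordy hdvd
    set w : ↥H := ((z : ↥(Subgroup.centralizer (QH : Set ↥H))) : ↥H) with hw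
    set x : G := (w : G) with hx
    have hordw : orderOf w = orderOf z :=
      (orderOf_injective (Subgroup.centralizer (QH : Set ↥H)).subtype Subtype.coe_injective z)
    have hordx : orderOf x = q := by
      have h3 : orderOf (H.subtype w) = orderOf w :=
        orderOf_injective H.subtype Subtype.coe_injective w
      rw [show x = H.subtype w from rfl, h3, hordw, hordz]
    have hxq : x ^ q = 1 := by rw [← hordx]; exact pow_orderOf_eq_one x
    -- x centralizes everything whose image lies in QH
    have hwC : w ∈ Subgroup.centralizer (QH : Set ↥H) := z.2
    have hxQ : ∀ g : ↥H, g ∈ QH → Commute x (g : G) := by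
      intro g hg
      have := (Subgroup.mem_centralizer_iff.mp hwC) g hg
      have hcoe : (g : G) * x = x * (g : G) := by
        rw [hx]
        exact_mod_cast congrArg (fun t : ↥H => (t : G)) this
      exact hcoe.symm
    have hxP : ∀ u ∈ P, Commute x u := by
      intro u hu
      exact hxQ ⟨u, hPH hu⟩ (hPQH (Subgroup.mem_subgroupOf.mpr hu))
    have hcent : ∀ r ∈ R, (∀ u ∈ P, Commute u r) → Commute x r := by
      intro r hrR hrP
      have hrC : r ∈ Subgroup.centralizer (P : Set G) :=
        Subgroup.mem_centralizer_iff.mpr fun u hu => (hrP u hu)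
      exact hxQ ⟨r, hCentH hrC⟩ (hRQH (Subgroup.mem_subgroupOf.mpr hrR))
    have hmain := pxq hq hne P hP x hxq hxP (Nat.card ↥R) R le_rfl hRp
      (by rw [Subgroup.normalizer_eq_top_iff.mpr hRnormal]; exact le_top)
      (by rw [Subgroup.normalizer_eq_top_iff.mpr hRnormal]; exact Subgroup.mem_top x) hcent
    have hxR : x ∈ R := hG (Subgroup.mem_centralizer_iff.mpr fun r hr => (hmain r hr).symm)
    obtain ⟨k, hk⟩ := hRp ⟨x, hxR⟩
    have hxpk : x ^ p ^ k = 1 := by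
      have := congrArg (fun t : ↥R => (t : G)) hk
      push_cast at this
      exact this
    have : q ∣ p ^ k := by
      rw [← hordx]
      exact orderOf_dvd_of_pow_eq_one hxpk
    exact hne ((Nat.prime_dvd_prime_iff_eq hq hp).mp (hq.dvd_of_dvd_pow this))
  have hn := Nat.eq_prime_pow_of_unique_prime_dvd hordy
    (fun {d} hd hdvd => key d hd hdvd)
  exact ⟨(orderOf y).primeFactorsList.length, by rw [← hn]; exact pow_orderOf_eq_one y⟩
end

section
/- Every p-centric subgroup of a finite group G is distinguished; that is, if Z(P) is a Sylow p-subgroup of C_G(P), then Ω_1 Z(P) contains a p-central element of G. -/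
/-- Every nontrivial `p`-centric subgroup is distinguished: its center
`Z(P) = P ⊓ C_G(P)` contains a `p`-central element of `G`. -/
theorem stmt6 (p : ℕ) [Fact p.Prime] (G : Type*) [Group G] [Finite G]
    (P : Subgroup G) (hne : P ≠ ⊥) (hP : IsPGroup p P) (hc : IsPCentric p P) :
    ∃ x ∈ P ⊓ Subgroup.centralizer (P : Set G), IsPCentral p x := by
  -- Take a Sylow `p`-subgroup `S` containing `P`.
  obtain ⟨S, hPS⟩ := hP.exists_le_sylow
  -- `S` is nontrivial since `P ≠ ⊥`.
  have hSbot : (S : Subgroup G) ≠ ⊥ := fun h => hne (le_bot_iff.mp (h ▸ hPS))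
  haveI : Nontrivial (↥(S : Subgroup G)) := by
    rwa [Subgroup.nontrivial_iff_ne_bot]
  -- center of `S` is a nontrivial `p`-group; get an element of order `p`.
  have hScenter : IsPGroup p (Subgroup.center ↥(S : Subgroup G)) :=
    S.isPGroup'.to_subgroup _
  haveI : Nontrivial (Subgroup.center ↥(S : Subgroup G)) := IsPGroup.center_nontrivial S.isPGroup'
  have hdvd : p ∣ Nat.card (Subgroup.center ↥(S : Subgroup G)) := by
    obtain ⟨n, hn⟩ := hScenter.exists_card_eq
    rcases n with _ | n
    · rw [pow_zero] at hn
      exact absurd hn Finite.one_lt_card.ne'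
    · exact hn ▸ dvd_pow_self p (Nat.succ_ne_zero n)
  obtain ⟨g, hg⟩ := exists_prime_orderOf_dvd_card' p hdvd
  set x : G := ((g : ↥(S : Subgroup G)) : G) with hx
  have hox : orderOf x = p := by
    rw [← hg]
    rw [Subgroup.orderOf_coe, Subgroup.orderOf_coe]
  -- `x` centralizes `S`.
  have hxc : x ∈ Subgroup.centralizer ((S : Subgroup G) : Set G) := by
    rw [Subgroup.mem_centralizer_iff]
    intro m hm
    have := (Subgroup.mem_center_iff.mp g.2) ⟨m, hm⟩
    exact congrArg Subtype.val this
  have hxP : x ∈ Subgroup.centralizer (P : Set G) :=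
    Subgroup.centralizer_le (by exact_mod_cast hPS) hxc
  -- The subgroup `Q = Z(P) ⊔ ⟨x⟩` is a `p`-subgroup of `C_G(P)` containing `Z(P)`.
  set Z := P ⊓ Subgroup.centralizer (P : Set G) with hZ
  set Q := Z ⊔ Subgroup.zpowers x with hQ
  have hxpow : IsPGroup p (Subgroup.zpowers x) := by
    apply IsPGroup.of_card (n := 1)
    rw [Nat.card_zpowers, hox, pow_one]
  have hZnorm : Z ≤ Subgroup.normalizer ((Subgroup.zpowers x : Subgroup G) : Set G) := by
    intro z hz
    have hcomm : Commute z x := Subgroup.mem_centralizer_iff.mp hxP z hz.1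
    rw [Subgroup.mem_normalizer_iff]
    intro h
    simp only [Subgroup.mem_zpowers_iff]
    constructor
    · rintro ⟨n, rfl⟩
      exact ⟨n, by rw [(hcomm.zpow_right n).eq, mul_inv_cancel_right]⟩
    · rintro ⟨n, hn⟩
      refine ⟨n, ?_⟩
      have h2 : h = z⁻¹ * x ^ n * z := by rw [hn]; group
      rw [h2, ((hcomm.zpow_right n).inv_left).eq, inv_mul_cancel_right]
  have hQp : IsPGroup p Q := IsPGroup.to_sup_of_normal_right' hP.to_inf_left hxpow hZnorm
  have hQle : Q ≤ Subgroup.centralizer (P : Set G) :=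
    sup_le inf_le_right ((Subgroup.zpowers_le).mpr hxP)
  have hQeq : Q = Z := hc Q hQle hQp le_sup_left
  have hxZ : x ∈ Z := hQeq ▸ Subgroup.mem_sup_right (Subgroup.mem_zpowers x)
  exact ⟨x, hxZ, hox, S, ⟨g.1.2, hxc⟩⟩
end

section
/- Let G be a finite group, z a p-central element, and Z = ⟨z⟩. Then the poset of nontrivial p-subgroups of G that contain a p-central element and are normalized by Z is conically contractible: for P in the poset, P ≤ PZ ≥ Z gives a contracting homotopy, where PZ is the subgroup generated by P and Z. -/
/-- For `z` a `p`-central element and `Z = ⟨z⟩`, the poset of nontrivial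
`p`-subgroups containing a `p`-central element and normalized by `Z` is conically
contractible via `P ≤ PZ ≥ Z`. -/
theorem stmt13 (p : ℕ) [Fact p.Prime] (G : Type*) [Group G] [Finite G]
    (z : G) (hz : IsPCentral p z) (Z : Subgroup G) (hZ : Z = Subgroup.zpowers z) :
    ∀ P : Subgroup G,
      (P ≠ ⊥ ∧ IsPGroup p P ∧ (∃ x ∈ P, IsPCentral p x) ∧ Z ≤ Subgroup.normalizer (P : Set G)) →
      (((P ⊔ Z) ≠ ⊥ ∧ IsPGroup p ↥(P ⊔ Z) ∧ (∃ x ∈ P ⊔ Z, IsPCentral p x) ∧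
          Z ≤ Subgroup.normalizer ((P ⊔ Z : Subgroup G) : Set G)) ∧
        P ≤ P ⊔ Z ∧ Z ≤ P ⊔ Z) := by
  rintro P ⟨hPbot, hPp, ⟨x, hxP, hxc⟩, hZN⟩
  have hZp : IsPGroup p Z := by
    subst hZ
    exact IsPGroup.of_card (by rw [Nat.card_zpowers, hz.1, pow_one])
  refine ⟨⟨?_, hPp.to_sup_of_normal_left' hZp hZN, ⟨x, Subgroup.mem_sup_left hxP, hxc⟩, ?_⟩,
    le_sup_left, le_sup_right⟩
  · intro h
    exact hPbot (le_bot_iff.mp (h ▸ (le_sup_left : P ≤ P ⊔ Z)))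
  · exact le_sup_right.trans Subgroup.le_normalizer
end
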